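/- For every sequence {q_n} of positive real numbers, the inequality p_{n+1} - p_n < p_n * (q_{n+1} - q_n + 1)/q_n holds for infinitely many values of n. -/

import Mathlib

/-- `p n` is the `n`-th prime number (1-indexed), as a real number. -/
noncomputable def p (n : ℕ) : ℝ := Nat.nth Nat.Prime (n - 1)

lemma nth_prime_pos (k : ℕ) : (0:ℝ) < Nat.nth Nat.Prime k := by
  have := (Nat.nth_mem_of_infinite (p := Nat.Prime) Nat.infinite_setOf_prime k).pos
  exact_mod_cast this

lemma p_pos (n : ℕ) : 0 < p n := nth_prime_pos _

lemma not_summable_nth_prime :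
    ¬ Summable (fun n : ℕ => 1 / (Nat.nth Nat.Prime n : ℝ)) := by
  intro h
  apply Nat.Primes.not_summable_one_div
  have hbij : Function.Bijective (fun n : ℕ =>
      (⟨Nat.nth Nat.Prime n, Nat.nth_mem_of_infinite Nat.infinite_setOf_prime n⟩ : Nat.Primes)) := by
    constructor
    · intro a b hab
      exact Nat.nth_injective Nat.infinite_setOf_prime (congrArg Subtype.val hab)
    · rintro ⟨r, hr⟩
      obtain ⟨n, hn⟩ := Nat.subset_range_nth (p := Nat.Prime) hr
      exact ⟨n, by simp [hn]⟩
  exact ((Equiv.ofBijective _ hbij).summable_iff).mp h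

theorem gap_inequality (q : ℕ → ℝ) (hq : ∀ n, 0 < q n) :
    {n : ℕ | p (n + 1) - p n < p n * ((q (n + 1) - q n + 1) / q n)}.Infinite := by
  by_contra hfin
  rw [Set.not_infinite] at hfin
  obtain ⟨N, hN⟩ := hfin.bddAbove
  set a : ℕ → ℝ := fun n => q n / p n with ha
  have hapos : ∀ n, 0 < a n := fun n => div_pos (hq n) (p_pos n)
  have key : ∀ n, N + 1 ≤ n → 1 / p (n + 1) ≤ a n - a (n + 1) := by
    intro n hn
    have hnot : ¬ (p (n + 1) - p n < p n * ((q (n + 1) - q n + 1) / q n)) := by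
      intro h
      exact absurd (hN h) (by omega)
    push_neg at hnot
    have hpn := p_pos n
    have hpn1 := p_pos (n + 1)
    have hqn := hq n
    have h1 : p n * (q (n + 1) - q n + 1) ≤ (p (n + 1) - p n) * q n := by
      rw [mul_div_assoc', div_le_iff₀ hqn] at hnot
      exact hnot
    have h2 : a n - a (n + 1) = (q n * p (n + 1) - p n * q (n + 1)) / (p n * p (n + 1)) := by
      simp only [ha]
      field_simp
    rw [h2, div_le_div_iff₀ hpn1 (mul_pos hpn hpn1)]
    nlinarith
  have hbound : ∀ m : ℕ, ∑ k ∈ Finset.range m,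
      (1 / (Nat.nth Nat.Prime (N + 1 + k) : ℝ)) ≤ a (N + 1) := by
    intro m
    have step : ∑ k ∈ Finset.range m, (1 / (Nat.nth Nat.Prime (N + 1 + k) : ℝ)) ≤
        ∑ k ∈ Finset.range m, (a (N + 1 + k) - a (N + 1 + k + 1)) := by
      apply Finset.sum_le_sum
      intro k _
      have := key (N + 1 + k) (by omega)
      have hp : p (N + 1 + k + 1) = (Nat.nth Nat.Prime (N + 1 + k) : ℝ) := by
        simp [p]
      rw [hp] at this
      exact this
    calc ∑ k ∈ Finset.range m, (1 / (Nat.nth Nat.Prime (N + 1 + k) : ℝ))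
        ≤ ∑ k ∈ Finset.range m, (a (N + 1 + k) - a (N + 1 + k + 1)) := step
      _ = a (N + 1) - a (N + 1 + m) := by
          simpa [add_assoc] using Finset.sum_range_sub' (fun k => a (N + 1 + k)) m
      _ ≤ a (N + 1) := by linarith [hapos (N + 1 + m)]
  have hsum : Summable (fun k : ℕ => 1 / (Nat.nth Nat.Prime (N + 1 + k) : ℝ)) :=
    summable_of_sum_range_le (fun k => by positivity) hbound
  have hsum' : Summable (fun k : ℕ => 1 / (Nat.nth Nat.Prime (k + (N + 1)) : ℝ)) := by
    simpa [add_comm] using hsum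
  exact not_summable_nth_prime ((summable_nat_add_iff (N + 1)).mp hsum')
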